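/- Let d ≥ 1, let the coordinates {1,…,d} be partitioned into disjoint sets D (desirable) and U (undesirable) with D ∪ U = {1,…,d}, let c ∈ ℝ^d satisfy c_f > 0 for all f, let y ∈ ℝ^d satisfy y_f ≥ 0 for all f, and let α > 0. Suppose there exists f* ∈ D with y_{f*} > 0 such that y_f/c_f < y_{f*}/c_{f*} for every f ∈ U. Then every minimizer e of the linear cost cᵀe over {e ∈ ℝ^d : e ≥ 0, yᵀe ≥ α} satisfies e_f = 0 for all f ∈ U; consequently, √(Σ_{f∈D} e_f²) ≥ β·√(Σ_f e_f²) for every β ∈ (0,1], i.e., every best response is a β-desirable effort profile for every β ∈ (0,1]. -/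

import Mathlib

/-- If there is a desirable feature `f* ∈ D` with `y f* > 0` whose
bang-per-buck strictly dominates that of every undesirable feature, then every
minimizer of the linear cost `cᵀe` over `{e ≥ 0 : yᵀe ≥ α}` puts zero effort on
all undesirable features, hence is β-desirable for every β ∈ (0,1]. -/
theorem stmt_3 (d : ℕ) (hd : 1 ≤ d) (D U : Finset (Fin d))
    (hdisj : Disjoint D U) (hunion : D ∪ U = Finset.univ)
    (c : Fin d → ℝ) (hc : ∀ f, 0 < c f)
    (y : Fin d → ℝ) (hy : ∀ f, 0 ≤ y f) (α : ℝ) (hα : 0 < α)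
    (fstar : Fin d) (hfstar : fstar ∈ D) (hystar : 0 < y fstar)
    (hbpb : ∀ f ∈ U, y f / c f < y fstar / c fstar)
    (e : Fin d → ℝ) (hpos : ∀ f, 0 ≤ e f) (hfeas : α ≤ ∑ f, y f * e f)
    (hopt : ∀ e' : Fin d → ℝ, (∀ f, 0 ≤ e' f) → α ≤ ∑ f, y f * e' f →
      ∑ f, c f * e f ≤ ∑ f, c f * e' f) :
    (∀ f ∈ U, e f = 0) ∧
    ∀ β : ℝ, 0 < β → β ≤ 1 →
      β * Real.sqrt (∑ f, e f ^ 2) ≤ Real.sqrt (∑ f ∈ D, e f ^ 2) := by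
  have hU0 : ∀ f ∈ U, e f = 0 := by
    intro f hfU
    by_contra hne
    have hef : 0 < e f := lt_of_le_of_ne (hpos f) (Ne.symm hne)
    have hfne : f ≠ fstar := by
      intro h; subst h; exact (Finset.disjoint_left.mp hdisj hfstar) hfU
    set t : ℝ := y f * e f / y fstar with ht
    have ht0 : 0 ≤ t := div_nonneg (mul_nonneg (hy f) (hpos f)) hystar.le
    set e' : Fin d → ℝ := fun g =>
      e g + ((if g = fstar then t else 0) + (if g = f then -(e f) else 0)) with he'
    have hsum : ∀ w : Fin d → ℝ,
        ∑ g, w g * e' g = (∑ g, w g * e g) + (w fstar * t - w f * e f) := by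
      intro w
      simp only [he', mul_add, Finset.sum_add_distrib, mul_ite, mul_zero,
        Finset.sum_ite_eq', Finset.mem_univ, if_true, mul_neg]
      ring
    have he'pos : ∀ g, 0 ≤ e' g := by
      intro g
      by_cases hgf : g = f
      · have : e' g = 0 := by rw [hgf]; simp [he', if_neg hfne]
        rw [this]
      · by_cases hgs : g = fstar
        · have : e' g = e fstar + t := by
            rw [hgs]; simp [he', Ne.symm hfne]
          rw [this]
          have := hpos fstar
          linarith
        · have : e' g = e g := by simp [he', hgs, hgf]
          rw [this]; exact hpos g
    have he'feas : α ≤ ∑ g, y g * e' g := by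
      rw [hsum y]
      have : y fstar * t = y f * e f := by
        rw [ht]; field_simp [hystar.ne']
      linarith
    have hle := hopt e' he'pos he'feas
    rw [hsum c] at hle
    -- need c fstar * t < c f * e f
    have hbp := hbpb f hfU
    have h1 : y f * c fstar < y fstar * c f := by
      rw [div_lt_div_iff₀ (hc f) (hc fstar)] at hbp
      linarith
    have h2 : c fstar * t < c f * e f := by
      rw [ht, mul_div_assoc']
      rw [div_lt_iff₀ hystar]
      calc c fstar * (y f * e f) = (y f * c fstar) * e f := by ring
        _ < (y fstar * c f) * e f := by
            exact mul_lt_mul_of_pos_right h1 hef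
        _ = c f * e f * y fstar := by ring
    linarith
  refine ⟨hU0, ?_⟩
  intro β hβ0 hβ1
  have hsq : ∑ f, e f ^ 2 = ∑ f ∈ D, e f ^ 2 := by
    rw [← hunion, Finset.sum_union hdisj]
    have : ∑ f ∈ U, e f ^ 2 = 0 :=
      Finset.sum_eq_zero fun f hf => by rw [hU0 f hf]; ring
    linarith
  rw [hsq]
  have h0 : 0 ≤ Real.sqrt (∑ f ∈ D, e f ^ 2) := Real.sqrt_nonneg _
  nlinarith
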